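/- Price of stability in label denoising: any Nash equilibrium x^NE of the label denoising game has average noise rate at least that of any social-welfare maximizer x^SWM, i.e., x̄(x^NE) ≥ x̄(x^SWM). -/

import Mathlib

open Finset

lemma sum_update_apply' {N : ℕ} (F : Fin N → ℝ → ℝ) (b : Fin N → ℝ) (n : Fin N) (v : ℝ) :
    ∑ m, F m (Function.update b n v m) = (∑ m, F m (b m)) + (F n v - F n (b n)) := by
  classical
  have key : ∀ m : Fin N, F m (Function.update b n v m) - F m (b m)
      = if m = n then F n v - F n (b n) else 0 := by
    intro m; by_cases h : m = n
    · subst h; simp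
    · simp [Function.update_of_ne h, h]
  have h2 : ∑ m, (F m (Function.update b n v m) - F m (b m)) = F n v - F n (b n) := by
    rw [Finset.sum_congr rfl (fun m _ => key m)]
    simp
  rw [Finset.sum_sub_distrib] at h2; linarith

lemma concave_increment {g : ℝ → ℝ} (hg : ConcaveOn ℝ Set.univ g) {a c h : ℝ}
    (hh : 0 ≤ h) (hac : a ≤ c) : g (c + h) - g c ≤ g (a + h) - g a := by
  rcases eq_or_lt_of_le hh with rfl | hh
  · simp
  rcases eq_or_lt_of_le hac with rfl | hac
  · simp
  have hL : 0 < c + h - a := by linarith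
  have hlam0 : 0 ≤ h / (c + h - a) := by positivity
  have hmu0 : 0 ≤ (c - a) / (c + h - a) := by
    apply div_nonneg <;> linarith
  have hsum : h / (c + h - a) + (c - a) / (c + h - a) = 1 := by
    field_simp; ring
  have i1 := hg.2 (Set.mem_univ a) (Set.mem_univ (c + h)) hlam0 hmu0 hsum
  have i2 := hg.2 (Set.mem_univ a) (Set.mem_univ (c + h)) hmu0 hlam0 (by linarith)
  simp only [smul_eq_mul] at i1 i2
  have e1 : h / (c + h - a) * a + (c - a) / (c + h - a) * (c + h) = c := by
    field_simp; ring
  have e2 : (c - a) / (c + h - a) * a + h / (c + h - a) * (c + h) = a + h := by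
    field_simp; ring
  rw [e1] at i1
  rw [e2] at i2
  have key : h / (c + h - a) * g a + (c - a) / (c + h - a) * g (c + h)
      + ((c - a) / (c + h - a) * g a + h / (c + h - a) * g (c + h))
      = g a + g (c + h) := by
    have : (h / (c + h - a) + (c - a) / (c + h - a)) * (g a + g (c + h))
        = 1 * (g a + g (c + h)) := by rw [hsum]
    nlinarith [this]
  linarith

lemma strict_convex_pair {f : ℝ → ℝ} (hf : StrictConvexOn ℝ Set.univ f)
    {a p q b : ℝ} (h1 : a < p) (h2 : p ≤ q) (h3 : q < b) (h4 : p - a = b - q) :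
    f p - f a < f b - f q := by
  rcases eq_or_lt_of_le h2 with rfl | hpq
  · have hab : a ≠ b := by intro h; rw [h] at h1; linarith
    have i := hf.2 (Set.mem_univ a) (Set.mem_univ b) hab (by norm_num : (0:ℝ) < 1/2)
      (by norm_num : (0:ℝ) < 1/2) (by norm_num)
    simp only [smul_eq_mul] at i
    have e : (1/2 : ℝ) * a + (1/2 : ℝ) * b = p := by linarith
    rw [e] at i
    linarith
  · have haq : a ≠ q := by intro h; linarith
    have hpb : p ≠ b := by intro h; linarith
    have hden1 : 0 < q - a := by linarith
    have hden2 : 0 < b - p := by linarith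
    have i1 := hf.2 (Set.mem_univ a) (Set.mem_univ q) haq
      (show (0:ℝ) < (q - p) / (q - a) from div_pos (by linarith) hden1)
      (show (0:ℝ) < (p - a) / (q - a) from div_pos (by linarith) hden1)
      (by field_simp; ring)
    have i2 := hf.2 (Set.mem_univ p) (Set.mem_univ b) hpb
      (show (0:ℝ) < (b - q) / (b - p) from div_pos (by linarith) hden2)
      (show (0:ℝ) < (q - p) / (b - p) from div_pos (by linarith) hden2)
      (by field_simp; ring)
    simp only [smul_eq_mul] at i1 i2
    have e1 : (q - p) / (q - a) * a + (p - a) / (q - a) * q = p := by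
      field_simp; ring
    have e2 : (b - q) / (b - p) * p + (q - p) / (b - p) * b = q := by
      field_simp; ring
    rw [e1] at i1
    rw [e2] at i2
    have j1 : f p * (q - a) < (q - p) * f a + (p - a) * f q := by
      rw [div_mul_eq_mul_div, div_mul_eq_mul_div, ← add_div,
        lt_div_iff₀ hden1] at i1
      linarith
    have j2 : f q * (b - p) < (b - q) * f p + (q - p) * f b := by
      rw [div_mul_eq_mul_div, div_mul_eq_mul_div, ← add_div,
        lt_div_iff₀ hden2] at i2
      linarith
    by_contra hcon
    push_neg at hcon
    have hb : b = q + (p - a) := by linarith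
    subst hb
    have prod := mul_le_mul_of_nonneg_left hcon (le_of_lt (sub_pos.mpr hpq))
    nlinarith [j1, j2, prod]


/-- Price of stability in label denoising: any Nash equilibrium has average noise
rate at least that of any social-welfare maximizer. -/
theorem pos_label_denoising (N : ℕ) (d w ε : Fin N → ℝ)
    (hd : ∀ n, 0 < d n) (hw : ∀ n, 0 < w n) (hε : ∀ n, 0 ≤ ε n)
    (g f : ℝ → ℝ)
    (hg : ConcaveOn ℝ Set.univ g) (hg' : Antitone g)
    (hf : StrictConvexOn ℝ Set.univ f) (hf' : Antitone f)
    (P : Fin N → (Fin N → ℝ) → ℝ)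
    (hP : P = fun n x => w n * g ((∑ i, d i * x i) / ∑ i, d i)
      - d n * (f (x n) - f (ε n)))
    (xne xswm : Fin N → ℝ)
    (hne_feas : ∀ n, xne n ∈ Set.Icc 0 (ε n))
    (hne : ∀ n, ∀ y ∈ Set.Icc 0 (ε n), P n (Function.update xne n y) ≤ P n xne)
    (hswm_feas : ∀ n, xswm n ∈ Set.Icc 0 (ε n))
    (hswm : ∀ y : Fin N → ℝ, (∀ n, y n ∈ Set.Icc 0 (ε n)) →
      (∑ n, P n y) ≤ ∑ n, P n xswm) :
    (∑ i, d i * xswm i) / (∑ i, d i) ≤ (∑ i, d i * xne i) / (∑ i, d i) := by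
  classical
  by_contra hcon
  push_neg at hcon
  have hN : N ≠ 0 := by
    rintro rfl
    simp at hcon
  have : Nonempty (Fin N) := Fin.pos_iff_nonempty.mp (Nat.pos_of_ne_zero hN)
  have hD : 0 < ∑ i, d i := Finset.sum_pos (fun i _ => hd i) Finset.univ_nonempty
  set D := ∑ i, d i with hDdef
  set Sa := ∑ i, d i * xne i with hSadef
  set Sb := ∑ i, d i * xswm i with hSbdef
  have hSab : Sa < Sb := by
    have h2 := mul_lt_mul_of_pos_right hcon hD
    rwa [div_mul_cancel₀ _ (ne_of_gt hD), div_mul_cancel₀ _ (ne_of_gt hD)] at h2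
  obtain ⟨n, hn⟩ : ∃ n, xne n < xswm n := by
    by_contra hall
    push_neg at hall
    have : Sb ≤ Sa :=
      Finset.sum_le_sum (fun i _ => mul_le_mul_of_nonneg_left (hall i) (hd i).le)
    linarith
  set c := min (xswm n - xne n) ((Sb - Sa) / d n) with hcdef
  have hc0 : 0 < c := lt_min (by linarith) (div_pos (by linarith) (hd n))
  have hc1 : c ≤ xswm n - xne n := min_le_left _ _
  have hc2 : d n * c ≤ Sb - Sa := by
    have h3 : c ≤ (Sb - Sa) / d n := min_le_right _ _
    have h4 := mul_le_mul_of_nonneg_left h3 (hd n).le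
    calc d n * c ≤ d n * ((Sb - Sa) / d n) := h4
      _ = Sb - Sa := by
        rw [mul_comm, div_mul_cancel₀ _ (ne_of_gt (hd n))]
  set p := xne n + c / 2 with hpdef
  set q := xswm n - c / 2 with hqdef
  have hεne := hne_feas n
  have hεswm := hswm_feas n
  have hp_mem : p ∈ Set.Icc 0 (ε n) := by
    constructor
    · have := hεne.1; rw [hpdef]; linarith
    · have := hεswm.2; rw [hpdef]; linarith
  have hq_mem : q ∈ Set.Icc 0 (ε n) := by
    constructor
    · have := hεne.1; rw [hqdef]; linarith
    · have := hεswm.2; rw [hqdef]; linarith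
  subst hP
  -- Nash equilibrium deviation at n to p
  have hNE := hne n p hp_mem
  dsimp only at hNE
  have hsum1 : ∑ i, d i * Function.update xne n p i = Sa + d n * (c / 2) := by
    have h5 := sum_update_apply' (fun i t => d i * t) xne n p
    rw [h5, ← hSadef, hpdef]; ring
  rw [hsum1, Function.update_self] at hNE
  have ineq1 : w n * g ((Sa + d n * (c / 2)) / D) - w n * g (Sa / D)
      ≤ d n * (f p - f (xne n)) := by linarith
  -- Social welfare deviation at n down to q
  have hyfeas : ∀ m, Function.update xswm n q m ∈ Set.Icc 0 (ε m) := by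
    intro m
    by_cases hm : m = n
    · subst hm; rwa [Function.update_self]
    · rw [Function.update_of_ne hm]; exact hswm_feas m
  have hSW := hswm (Function.update xswm n q) hyfeas
  dsimp only at hSW
  have hsum2 : ∑ i, d i * Function.update xswm n q i = Sb - d n * (c / 2) := by
    have h5 := sum_update_apply' (fun i t => d i * t) xswm n q
    rw [h5, ← hSbdef, hqdef]; ring
  have hsum3 : ∑ m, d m * (f (Function.update xswm n q m) - f (ε m))
      = (∑ m, d m * (f (xswm m) - f (ε m)))
        + (d n * (f q - f (ε n)) - d n * (f (xswm n) - f (ε n))) := by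
    have h5 := sum_update_apply' (fun m t => d m * (f t - f (ε m))) xswm n q
    rw [h5]
  rw [Finset.sum_sub_distrib, Finset.sum_sub_distrib, ← Finset.sum_mul,
    ← Finset.sum_mul, hsum2, hsum3] at hSW
  set W := ∑ m, w m with hWdef
  have ineq2 : d n * (f (xswm n) - f q)
      ≤ W * g (Sb / D) - W * g ((Sb - d n * (c / 2)) / D) := by linarith
  -- strict convexity step
  have hmid : f p - f (xne n) < f (xswm n) - f q := by
    apply strict_convex_pair hf
    · rw [hpdef]; linarith
    · rw [hpdef, hqdef]; linarith
    · rw [hqdef]; linarith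
    · rw [hpdef, hqdef]; ring
  have hmid' : d n * (f p - f (xne n)) < d n * (f (xswm n) - f q) :=
    mul_lt_mul_of_pos_left hmid (hd n)
  -- concavity + antitonicity step
  have hW : 0 < W := Finset.sum_pos (fun i _ => hw i) Finset.univ_nonempty
  have hwn : w n ≤ W := Finset.single_le_sum (fun i _ => (hw i).le) (Finset.mem_univ n)
  have hη : 0 ≤ d n * (c / 2) / D :=
    div_nonneg (mul_nonneg (hd n).le (by linarith)) hD.le
  have hordered : Sa / D ≤ (Sb - d n * (c / 2)) / D := by
    apply div_le_div_of_nonneg_right ?_ hD.le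
    linarith
  have hstep := concave_increment hg hη hordered
  have e1 : (Sb - d n * (c / 2)) / D + d n * (c / 2) / D = Sb / D := by
    field_simp; ring
  have e2 : Sa / D + d n * (c / 2) / D = (Sa + d n * (c / 2)) / D := by
    field_simp
  rw [e1, e2] at hstep
  have hq2 : g ((Sa + d n * (c / 2)) / D) - g (Sa / D) ≤ 0 := by
    have : Sa / D ≤ (Sa + d n * (c / 2)) / D := by
      apply div_le_div_of_nonneg_right ?_ hD.le
      nlinarith [hd n, hc0]
    have := hg' this
    linarith
  have final : W * g (Sb / D) - W * g ((Sb - d n * (c / 2)) / D)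
      ≤ w n * g ((Sa + d n * (c / 2)) / D) - w n * g (Sa / D) := by
    have t1 : W * (g (Sb / D) - g ((Sb - d n * (c / 2)) / D))
        ≤ W * (g ((Sa + d n * (c / 2)) / D) - g (Sa / D)) :=
      mul_le_mul_of_nonneg_left hstep hW.le
    have t2 : W * (g ((Sa + d n * (c / 2)) / D) - g (Sa / D))
        ≤ w n * (g ((Sa + d n * (c / 2)) / D) - g (Sa / D)) :=
      mul_le_mul_of_nonpos_right hwn hq2
    rw [mul_sub, mul_sub] at t1 t2
    exact t1.trans t2
  linarith [ineq1, hmid', ineq2, final]
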